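/- Any quasi-inverse of a mapping of bounded distortion for triangles is itself a mapping of bounded distortion for triangles: let (T,d) be a metric space, let ω : T → T be a mapping of bounded distortion for triangles with constants D₁ ≥ 1 and D₂ ≥ 0, and let ω' : T → T be a quasi-inverse of ω with constant D₃ ≥ 0. Then ω' is a mapping of bounded distortion for triangles with constants D₁ and D₁(D₂ + 3D₃); that is, for all x, y, z ∈ T, (1/D₁)⟨x,y⟩_z − D₁(D₂ + 3D₃) ≤ ⟨ω'(x), ω'(y)⟩_{ω'(z)} ≤ D₁⟨x,y⟩_z + D₁(D₂ + 3D₃). -/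

import Mathlib

/-- The Gromov product `⟨y,z⟩ₓ = (d(x,y) + d(x,z) − d(y,z))/2` in a metric space. -/
noncomputable def gromovProduct {T : Type*} [MetricSpace T] (x y z : T) : ℝ :=
  (dist x y + dist x z - dist y z) / 2

/-- The Gromov product changes by at most the sum of the displacements of its arguments. -/
lemma gromovProduct_perturb {T : Type*} [MetricSpace T] (x y z x' y' z' : T) :
    |gromovProduct x y z - gromovProduct x' y' z'| ≤ dist x x' + dist y y' + dist z z' := by
  unfold gromovProduct
  have h1 := dist_triangle4 x x' y' y
  have h2 := dist_triangle4 x' x y y'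
  have h3 := dist_triangle4 x x' z' z
  have h4 := dist_triangle4 x' x z z'
  have h5 := dist_triangle4 y y' z' z
  have h6 := dist_triangle4 y' y z z'
  have c1 : dist y' y = dist y y' := dist_comm _ _
  have c2 : dist z' z = dist z z' := dist_comm _ _
  have c3 : dist x' x = dist x x' := dist_comm _ _
  rw [abs_le]
  constructor <;> linarith

/-- Any quasi-inverse of a mapping of bounded distortion for triangles is itself a
mapping of bounded distortion for triangles, with constants `D₁` and `D₁(D₂ + 3D₃)`. -/
theorem quasiInverse_boundedDistortion {T : Type*} [MetricSpace T]
    (ω ω' : T → T) (D₁ D₂ D₃ : ℝ) (hD₁ : 1 ≤ D₁) (hD₂ : 0 ≤ D₂) (hD₃ : 0 ≤ D₃)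
    (hω : ∀ x y z : T,
      (1 / D₁) * gromovProduct z x y - D₂ ≤ gromovProduct (ω z) (ω x) (ω y) ∧
      gromovProduct (ω z) (ω x) (ω y) ≤ D₁ * gromovProduct z x y + D₂)
    (hω' : ∀ x : T, dist x (ω (ω' x)) ≤ D₃ ∧ dist x (ω' (ω x)) ≤ D₃) :
    ∀ x y z : T,
      (1 / D₁) * gromovProduct z x y - D₁ * (D₂ + 3 * D₃)
          ≤ gromovProduct (ω' z) (ω' x) (ω' y) ∧
      gromovProduct (ω' z) (ω' x) (ω' y) ≤ D₁ * gromovProduct z x y + D₁ * (D₂ + 3 * D₃) := by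
  intro x y z
  have hD₁0 : (0:ℝ) < D₁ := lt_of_lt_of_le one_pos hD₁
  obtain ⟨hlo, hhi⟩ := hω (ω' x) (ω' y) (ω' z)
  have hpert := gromovProduct_perturb (ω (ω' z)) (ω (ω' x)) (ω (ω' y)) z x y
  rw [abs_le] at hpert
  obtain ⟨hp1, hp2⟩ := hpert
  have dx : dist (ω (ω' x)) x ≤ D₃ := by rw [dist_comm]; exact (hω' x).1
  have dy : dist (ω (ω' y)) y ≤ D₃ := by rw [dist_comm]; exact (hω' y).1
  have dz : dist (ω (ω' z)) z ≤ D₃ := by rw [dist_comm]; exact (hω' z).1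
  set a := gromovProduct (ω' z) (ω' x) (ω' y) with ha
  set g := gromovProduct z x y with hg
  set b := gromovProduct (ω (ω' z)) (ω (ω' x)) (ω (ω' y)) with hb
  have hb1 : b ≤ g + 3 * D₃ := by linarith
  have hb2 : g - 3 * D₃ ≤ b := by linarith
  constructor
  · -- from g - 3D₃ ≤ b ≤ D₁ a + D₂ : a ≥ (g - D₂ - 3D₃)/D₁ ≥ g/D₁ - D₁(D₂+3D₃)
    have h : g - 3 * D₃ - D₂ ≤ D₁ * a := by linarith
    rw [div_mul_eq_mul_div, div_sub' (ne_of_gt hD₁0), div_le_iff₀ hD₁0, one_mul]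
    nlinarith [h, mul_nonneg (mul_nonneg hD₁0.le hD₁0.le) (by linarith : (0:ℝ) ≤ D₂ + 3*D₃),
      sq_nonneg (D₁ - 1), mul_nonneg (by nlinarith [sq_nonneg (D₁-1)] : (0:ℝ) ≤ D₁*D₁ - 1)
        (by linarith : (0:ℝ) ≤ D₂ + 3*D₃)]
  · -- from (1/D₁) a - D₂ ≤ b ≤ g + 3D₃ : a ≤ D₁ (g + D₂ + 3D₃)
    have h : (1 / D₁) * a ≤ g + D₂ + 3 * D₃ := by linarith
    rw [div_mul_eq_mul_div, one_mul, div_le_iff₀ hD₁0] at h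
    nlinarith
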